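/- Let X be a real random variable with E X ∈ (0,∞], P(X < 0) > 0, g(θ₀) < ∞ for some θ₀ > 0, where g(θ) = E[e^{-θX}], and suppose ρ = g(κ) = 1 where κ = sup{θ > 0 : g(θ) < 1}. Then E[(-X) e^{-κX}] ∈ (0,∞]; that is, g'(κ) is strictly positive but possibly infinite. -/

import Mathlib

open MeasureTheory Filter Set
open scoped ENNReal

noncomputable section

lemma exp_bound1 (u : ℝ) (hu : 0 ≤ u) : Real.exp (-u) ≤ 1 - u + u^2 := by
  rw [Real.exp_neg, inv_le_iff_one_le_mul₀ (Real.exp_pos u)]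
  have h0 : (0:ℝ) ≤ 1 - u + u^2 := by nlinarith
  nlinarith [mul_le_mul_of_nonneg_left (Real.add_one_le_exp u) h0]

lemma exp_bound2 (u : ℝ) (hu : 0 ≤ u) : Real.exp u ≤ 1 + u + u^2 * Real.exp u := by
  have h1 : -u + 1 ≤ Real.exp (-u) := Real.add_one_le_exp (-u)
  have h2 : Real.exp (-u) * Real.exp u = 1 := by rw [← Real.exp_add]; simp
  have h3 : (-u + 1) * Real.exp u ≤ 1 := by
    calc (-u+1) * Real.exp u ≤ Real.exp (-u) * Real.exp u :=
          mul_le_mul_of_nonneg_right h1 (Real.exp_pos u).le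
    _ = 1 := h2
  nlinarith [Real.exp_pos u, mul_le_mul_of_nonneg_left h3 hu]

lemma exp_sq_le (v : ℝ) (hv : 0 ≤ v) : v^2 ≤ 4 * Real.exp v := by
  have h1 : v/2 ≤ Real.exp (v/2) := by nlinarith [Real.add_one_le_exp (v/2)]
  have h2 : Real.exp (v/2) * Real.exp (v/2) = Real.exp v := by
    rw [← Real.exp_add]; ring_nf
  nlinarith [sq_nonneg (Real.exp (v/2) - v/2), Real.exp_pos (v/2)]

set_option maxHeartbeats 1000000 in
lemma exists_small {Ω : Type*} [MeasurableSpace Ω] (P : Measure Ω) [IsProbabilityMeasure P]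
    (X : Ω → ℝ) (hX : Measurable X)
    (hneg : ∫⁻ ω, ENNReal.ofReal (-X ω) ∂P < ⊤)
    (hmean : ∫⁻ ω, ENNReal.ofReal (-X ω) ∂P < ∫⁻ ω, ENNReal.ofReal (X ω) ∂P)
    (θ₀ : ℝ) (hθ₀ : 0 < θ₀) (hfin : ∫⁻ ω, ENNReal.ofReal (Real.exp (-θ₀ * X ω)) ∂P < ⊤) :
    ∃ θ, 0 < θ ∧ ∫⁻ ω, ENNReal.ofReal (Real.exp (-θ * X ω)) ∂P < 1 := by
  set L := ∫⁻ ω, ENNReal.ofReal (-X ω) ∂P with hL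
  -- MCT to find a truncation level
  have hmct : ∫⁻ ω, ENNReal.ofReal (X ω) ∂P
      = ⨆ n : ℕ, ∫⁻ ω, ENNReal.ofReal (min (X ω) n) ∂P := by
    rw [← lintegral_iSup (fun n => (hX.min measurable_const).ennreal_ofReal)
      (fun n m hnm ω => ENNReal.ofReal_le_ofReal (min_le_min le_rfl (by exact_mod_cast hnm)))]
    congr 1; funext ω
    refine le_antisymm ?_ (iSup_le fun n => ENNReal.ofReal_le_ofReal (min_le_left _ _))
    refine le_iSup_of_le ⌈X ω⌉₊ ?_
    rw [min_eq_left (Nat.le_ceil _)]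
  rw [hmct] at hmean
  obtain ⟨n, hn⟩ := lt_iSup_iff.mp hmean
  set c : ℝ := (n : ℝ) with hcdef
  have hc : 0 ≤ c := Nat.cast_nonneg n
  set M := ∫⁻ ω, ENNReal.ofReal (min (X ω) c) ∂P with hM
  have hLM : L < M := hn
  have hMfin : M ≤ ENNReal.ofReal c := by
    calc M ≤ ∫⁻ _, ENNReal.ofReal c ∂P :=
        lintegral_mono fun ω => ENNReal.ofReal_le_ofReal (min_le_right _ _)
    _ = ENNReal.ofReal c := by simp
  have hMne : M ≠ ⊤ := (lt_of_le_of_lt hMfin ENNReal.ofReal_lt_top).ne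
  have hLne : L ≠ ⊤ := hneg.ne
  set θh := θ₀ / 2 with hθh
  have hθhpos : 0 < θh := by positivity
  set ψ : Ω → ℝ := fun ω => c^2 + (max (-X ω) 0)^2 * Real.exp (θh * max (-X ω) 0) with hψ
  have hψnn : ∀ ω, 0 ≤ ψ ω := by
    intro ω; have := sq_nonneg (max (-X ω) 0); positivity
  have hψmeas : Measurable fun ω => ENNReal.ofReal (ψ ω) := by
    apply Measurable.ennreal_ofReal
    exact (measurable_const.add (((hX.neg.max measurable_const).pow_const 2).mul
      ((hX.neg.max measurable_const).const_mul θh).exp))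
  set Ψ := ∫⁻ ω, ENNReal.ofReal (ψ ω) ∂P with hΨ
  have hΨfin : Ψ ≠ ⊤ := by
    have hpt : ∀ ω, ENNReal.ofReal (ψ ω) ≤
        ENNReal.ofReal (c^2 + 4/θh^2) + ENNReal.ofReal (4/θh^2) *
          ENNReal.ofReal (Real.exp (-θ₀ * X ω)) := by
      intro ω
      set u := max (-X ω) 0 with hu
      have hu0 : 0 ≤ u := le_max_right _ _
      have h1 : u^2 * Real.exp (θh * u) ≤ 4/θh^2 * (Real.exp (-θ₀ * X ω) + 1) := by
        have h2 : (θh*u)^2 ≤ 4 * Real.exp (θh*u) := exp_sq_le _ (by positivity)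
        have h3 : Real.exp (θh*u) * Real.exp (θh*u) = Real.exp (θ₀ * u) := by
          rw [← Real.exp_add]; congr 1; rw [hθh]; ring
        have h4 : Real.exp (θ₀ * u) ≤ Real.exp (-θ₀ * X ω) + 1 := by
          rcases le_total (X ω) 0 with h | h
          · rw [hu, max_eq_left (by linarith)]
            have he : θ₀ * -X ω = -θ₀ * X ω := by ring
            rw [he]; linarith
          · rw [hu, max_eq_right (by linarith)]
            simp only [mul_zero, Real.exp_zero]
            linarith [Real.exp_pos (-θ₀ * X ω)]
        have h5 : u^2 ≤ 4/θh^2 * Real.exp (θh*u) := by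
          rw [div_mul_eq_mul_div, le_div_iff₀ (by positivity)]
          calc u^2 * θh^2 = (θh*u)^2 := by ring
          _ ≤ 4 * Real.exp (θh*u) := h2
        calc u^2 * Real.exp (θh*u) ≤ (4/θh^2 * Real.exp (θh*u)) * Real.exp (θh*u) :=
              mul_le_mul_of_nonneg_right h5 (Real.exp_pos _).le
        _ = 4/θh^2 * Real.exp (θ₀*u) := by rw [mul_assoc, h3]
        _ ≤ 4/θh^2 * (Real.exp (-θ₀ * X ω) + 1) := by
              apply mul_le_mul_of_nonneg_left h4 (by positivity)
      calc ENNReal.ofReal (ψ ω)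
          ≤ ENNReal.ofReal ((c^2 + 4/θh^2) + 4/θh^2 * Real.exp (-θ₀ * X ω)) := by
            apply ENNReal.ofReal_le_ofReal
            rw [hψ]; simp only []
            nlinarith [Real.exp_pos (-θ₀ * X ω)]
      _ = ENNReal.ofReal (c^2 + 4/θh^2) + ENNReal.ofReal (4/θh^2 * Real.exp (-θ₀ * X ω)) := by
            rw [ENNReal.ofReal_add (by positivity) (by positivity)]
      _ = ENNReal.ofReal (c^2 + 4/θh^2) + ENNReal.ofReal (4/θh^2) *
            ENNReal.ofReal (Real.exp (-θ₀ * X ω)) := by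
            rw [ENNReal.ofReal_mul (by positivity)]
    have : Ψ ≤ ENNReal.ofReal (c^2 + 4/θh^2) + ENNReal.ofReal (4/θh^2) *
        ∫⁻ ω, ENNReal.ofReal (Real.exp (-θ₀ * X ω)) ∂P := by
      calc Ψ ≤ ∫⁻ ω, (ENNReal.ofReal (c^2 + 4/θh^2) + ENNReal.ofReal (4/θh^2) *
            ENNReal.ofReal (Real.exp (-θ₀ * X ω))) ∂P := lintegral_mono hpt
      _ = _ := by
            rw [lintegral_add_left measurable_const,
              lintegral_const_mul _ ((hX.const_mul (-θ₀)).exp).ennreal_ofReal]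
            simp
    refine (lt_of_le_of_lt this ?_).ne
    exact ENNReal.add_lt_top.mpr ⟨ENNReal.ofReal_lt_top,
      ENNReal.mul_lt_top ENNReal.ofReal_lt_top hfin⟩
  -- choose θ
  set d := M - L with hd
  have hdpos : 0 < d := tsub_pos_iff_lt.mpr hLM
  have hdne : d ≠ ⊤ := by
    rw [hd]; exact (tsub_le_self.trans_lt hMne.lt_top).ne
  have hdtR : 0 < d.toReal := ENNReal.toReal_pos hdpos.ne' hdne
  set t := min θh (d.toReal / (2 * (Ψ.toReal + 1))) with ht
  have htpos : 0 < t := lt_min hθhpos (by positivity)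
  have htθh : t ≤ θh := min_le_left _ _
  have htΨ : ENNReal.ofReal t * Ψ < d := by
    have h1 : ENNReal.ofReal t * Ψ = ENNReal.ofReal (t * Ψ.toReal) := by
      conv_lhs => rw [← ENNReal.ofReal_toReal hΨfin]
      rw [← ENNReal.ofReal_mul htpos.le]
    rw [h1]
    have h2 : t * Ψ.toReal < d.toReal := by
      have h3 : t ≤ d.toReal / (2 * (Ψ.toReal + 1)) := min_le_right _ _
      have h4 : 0 ≤ Ψ.toReal := ENNReal.toReal_nonneg
      have := mul_le_mul_of_nonneg_right h3 h4
      calc t * Ψ.toReal ≤ d.toReal / (2 * (Ψ.toReal + 1)) * Ψ.toReal := this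
      _ < d.toReal := by
            rw [div_mul_eq_mul_div, div_lt_iff₀ (by positivity)]
            nlinarith
    calc ENNReal.ofReal (t * Ψ.toReal) < ENNReal.ofReal d.toReal :=
          ENNReal.ofReal_lt_ofReal_iff hdtR |>.mpr h2
    _ = d := ENNReal.ofReal_toReal hdne
  clear_value t
  -- pointwise key inequality
  have key : ∀ ω, ENNReal.ofReal (Real.exp (-t * X ω)) + ENNReal.ofReal t * ENNReal.ofReal (min (X ω) c)
      ≤ (1 + ENNReal.ofReal t * ENNReal.ofReal (-X ω)) + (ENNReal.ofReal t * ENNReal.ofReal t) * ENNReal.ofReal (ψ ω) := by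
    intro ω
    set x := X ω with hx
    set u := max (-x) 0 with hudef
    have hu0 : 0 ≤ u := le_max_right _ _
    set m := max (min x c) 0 with hmdef
    have hm0 : 0 ≤ m := le_max_right _ _
    have e1 : ENNReal.ofReal (min x c) = ENNReal.ofReal m := by
      rcases le_total (min x c) 0 with h | h
      · rw [ENNReal.ofReal_of_nonpos h, hmdef, max_eq_right h]; simp
      · rw [hmdef, max_eq_left h]
    have e2 : ENNReal.ofReal (-x) = ENNReal.ofReal u := by
      rcases le_total (-x) 0 with h | h
      · rw [ENNReal.ofReal_of_nonpos h, hudef, max_eq_right h]; simp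
      · rw [hudef, max_eq_left h]
    rw [e1, e2, ← ENNReal.ofReal_mul htpos.le, ← ENNReal.ofReal_mul htpos.le,
      ← ENNReal.ofReal_mul htpos.le,
      ← ENNReal.ofReal_mul (by positivity : (0:ℝ) ≤ t * t)]
    have hreal : Real.exp (-t*x) + t*m ≤ 1 + t*u + t*t*ψ ω := ?real
    case _ =>
      calc ENNReal.ofReal (Real.exp (-t * x)) + ENNReal.ofReal (t * m)
          = ENNReal.ofReal (Real.exp (-t*x) + t*m) :=
            (ENNReal.ofReal_add (Real.exp_pos _).le (by positivity)).symm
        _ ≤ ENNReal.ofReal (1 + t*u + t*t*ψ ω) := ENNReal.ofReal_le_ofReal hreal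
        _ = 1 + ENNReal.ofReal (t*u) + ENNReal.ofReal (t*t*ψ ω) := by
            rw [ENNReal.ofReal_add (by positivity)
                (mul_nonneg (by positivity) (hψnn ω)),
              ENNReal.ofReal_add (by norm_num) (by positivity), ENNReal.ofReal_one]
    case real =>
      have hψω : ψ ω = c^2 + u^2 * Real.exp (θh * u) := rfl
      rcases le_total 0 x with hxpos | hxneg
      · -- x ≥ 0 : u = 0
        have hu : u = 0 := by rw [hudef, max_eq_right (by linarith)]
        have hm : m = min x c := by rw [hmdef, max_eq_left (le_min hxpos hc)]
        have hmx : m ≤ x := by rw [hm]; exact min_le_left _ _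
        have hmc : m ≤ c := by rw [hm]; exact min_le_right _ _
        have h1 : Real.exp (-t*x) ≤ Real.exp (-(t*m)) := by
          apply Real.exp_le_exp.mpr; nlinarith
        have h2 : Real.exp (-(t*m)) ≤ 1 - t*m + (t*m)^2 := exp_bound1 _ (by positivity)
        have h3 : c^2 ≤ ψ ω := by
          rw [hψω]; nlinarith [sq_nonneg u, Real.exp_pos (θh * u)]
        have hmm : m*m ≤ c*c := mul_le_mul hmc hmc hm0 hc
        have h4 : (t*m)^2 ≤ t*t*c^2 := by
          nlinarith [mul_le_mul_of_nonneg_left hmm (mul_nonneg htpos.le htpos.le)]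
        have h5 : t*t*c^2 ≤ t*t*(ψ ω) :=
          mul_le_mul_of_nonneg_left h3 (by positivity)
        rw [hu]
        nlinarith
      · -- x ≤ 0 : m = 0, u = -x
        have hu : u = -x := by rw [hudef, max_eq_left (by linarith)]
        have hm : m = 0 := by
          rw [hmdef, max_eq_right]; rw [min_le_iff]; left; linarith
        have hex : -t*x = t*u := by rw [hu]; ring
        have h1 : Real.exp (t*u) ≤ 1 + t*u + (t*u)^2 * Real.exp (t*u) :=
          exp_bound2 _ (by positivity)
        have h2 : Real.exp (t*u) ≤ Real.exp (θh*u) :=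
          Real.exp_le_exp.mpr (mul_le_mul_of_nonneg_right htθh hu0)
        have h3 : u^2 * Real.exp (θh*u) ≤ ψ ω := by
          rw [hψω]; nlinarith [sq_nonneg c]
        rw [hm, hex]
        have h4 : (t*u)^2 * Real.exp (t*u) ≤ t*t*(ψ ω) := by
          calc (t*u)^2 * Real.exp (t*u) ≤ (t*u)^2 * Real.exp (θh*u) :=
                mul_le_mul_of_nonneg_left h2 (sq_nonneg _)
          _ = t*t*(u^2 * Real.exp (θh*u)) := by ring
          _ ≤ t*t*(ψ ω) := mul_le_mul_of_nonneg_left h3 (by positivity)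
        nlinarith
  -- integrate
  refine ⟨t, htpos, ?_⟩
  have hint : ∫⁻ ω, ENNReal.ofReal (Real.exp (-t * X ω)) ∂P + ENNReal.ofReal t * M
      ≤ (1 + ENNReal.ofReal t * L) + (ENNReal.ofReal t * ENNReal.ofReal t) * Ψ := by
    have lhs_eq : ∫⁻ ω, (ENNReal.ofReal (Real.exp (-t * X ω)) + ENNReal.ofReal t * ENNReal.ofReal (min (X ω) c)) ∂P
        = ∫⁻ ω, ENNReal.ofReal (Real.exp (-t * X ω)) ∂P + ENNReal.ofReal t * M := by
      rw [lintegral_add_left ((hX.const_mul (-t)).exp).ennreal_ofReal,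
        lintegral_const_mul _ (hX.min measurable_const).ennreal_ofReal]
    have rhs_eq : ∫⁻ ω, ((1 + ENNReal.ofReal t * ENNReal.ofReal (-X ω)) + (ENNReal.ofReal t * ENNReal.ofReal t) * ENNReal.ofReal (ψ ω)) ∂P
        = (1 + ENNReal.ofReal t * L) + (ENNReal.ofReal t * ENNReal.ofReal t) * Ψ := by
      rw [lintegral_add_left, lintegral_add_left measurable_const,
        lintegral_const_mul (f := fun ω => ENNReal.ofReal (-X ω)) _ hX.neg.ennreal_ofReal, lintegral_const_mul _ hψmeas]
      · simp [hL, hΨ]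
      · exact measurable_const.add (measurable_const.mul hX.neg.ennreal_ofReal)
    rw [← lhs_eq, ← rhs_eq]
    exact lintegral_mono key
  have hstrict : (1 + ENNReal.ofReal t * L) + (ENNReal.ofReal t * ENNReal.ofReal t) * Ψ
      < 1 + ENNReal.ofReal t * M := by
    have h1 : ENNReal.ofReal t * L + (ENNReal.ofReal t * ENNReal.ofReal t) * Ψ
        = ENNReal.ofReal t * (L + ENNReal.ofReal t * Ψ) := by ring
    have h2 : L + ENNReal.ofReal t * Ψ < M := by
      calc L + ENNReal.ofReal t * Ψ < L + d :=
            (ENNReal.add_lt_add_iff_left hLne).mpr htΨ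
      _ = M := add_tsub_cancel_of_le hLM.le
    calc (1 + ENNReal.ofReal t * L) + (ENNReal.ofReal t * ENNReal.ofReal t) * Ψ
        = 1 + ENNReal.ofReal t * (L + ENNReal.ofReal t * Ψ) := by rw [add_assoc, h1]
    _ < 1 + ENNReal.ofReal t * M := by
        apply (ENNReal.add_lt_add_iff_left (by norm_num)).mpr
        exact (ENNReal.mul_lt_mul_iff_right (by simp [htpos]) ENNReal.ofReal_ne_top).mpr h2
  have hfinal : ∫⁻ ω, ENNReal.ofReal (Real.exp (-t * X ω)) ∂P + ENNReal.ofReal t * M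
      < 1 + ENNReal.ofReal t * M := lt_of_le_of_lt hint hstrict
  exact (ENNReal.add_lt_add_iff_right
    (ENNReal.mul_lt_top ENNReal.ofReal_lt_top hMne.lt_top).ne).mp hfinal

lemma self_mul_exp_neg_le_one (u : ℝ) : u * Real.exp (-u) ≤ 1 := by
  rcases le_total u 0 with h | h
  · nlinarith [Real.exp_pos (-u)]
  · have h1 : u ≤ Real.exp u := by nlinarith [Real.add_one_le_exp u]
    have h2 : Real.exp u * Real.exp (-u) = 1 := by rw [← Real.exp_add]; simp
    nlinarith [Real.exp_pos (-u), mul_le_mul_of_nonneg_right h1 (Real.exp_pos (-u)).le]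

lemma bdd_S {Ω : Type*} [MeasurableSpace Ω] (P : Measure Ω) [IsProbabilityMeasure P]
    (X : Ω → ℝ) (hX : Measurable X)
    (hXneg : 0 < P {ω | X ω < 0}) :
    BddAbove {θ : ℝ | 0 < θ ∧ ∫⁻ ω, ENNReal.ofReal (Real.exp (-θ * X ω)) ∂P < 1} := by
  have hunion : {ω | X ω < 0} = ⋃ n : ℕ, {ω | X ω < -(1/(n+1))} := by
    ext ω
    simp only [mem_setOf_eq, mem_iUnion]
    constructor
    · intro h
      obtain ⟨n, hn⟩ := exists_nat_gt (1/(-X ω))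
      refine ⟨n, ?_⟩
      have hpos : 0 < -X ω := by linarith
      have h1 : 1 < -X ω * n := by
        rw [div_lt_iff₀ hpos] at hn; linarith [mul_comm (-X ω) (n:ℝ)] 
      have h2 : (1:ℝ)/(n+1) < -X ω := by
        rw [div_lt_iff₀ (by positivity)]
        nlinarith
      linarith
    · rintro ⟨n, hn⟩
      have : (0:ℝ) < 1/(n+1) := by positivity
      linarith
  obtain ⟨n, hn⟩ : ∃ n : ℕ, P {ω | X ω < -(1/(n+1))} ≠ 0 := by
    by_contra h
    push_neg at h
    have : P {ω | X ω < 0} = 0 := by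
      rw [hunion]; exact measure_iUnion_null h
    exact absurd this hXneg.ne'
  set ε : ℝ := 1/(n+1) with hε
  have hεpos : 0 < ε := by positivity
  set p := P {ω | X ω < -ε} with hp
  have hppos : 0 < p := pos_iff_ne_zero.mpr hn
  have hpt : 0 < p.toReal := ENNReal.toReal_pos hn (measure_ne_top P _)
  refine ⟨Real.log (1/p.toReal) / ε, ?_⟩
  rintro θ ⟨hθpos, hθ1⟩
  have hset : MeasurableSet {ω | X ω < -ε} := hX measurableSet_Iio
  have hle : ENNReal.ofReal (Real.exp (θ * ε)) * p
      ≤ ∫⁻ ω, ENNReal.ofReal (Real.exp (-θ * X ω)) ∂P := by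
    rw [← setLIntegral_const {ω | X ω < -ε} _]
    refine le_trans (setLIntegral_mono ((hX.const_mul (-θ)).exp).ennreal_ofReal ?_)
      (setLIntegral_le_lintegral _ _)
    intro ω hω
    apply ENNReal.ofReal_le_ofReal
    apply Real.exp_le_exp.mpr
    have : X ω < -ε := hω
    nlinarith
  have hlt : ENNReal.ofReal (Real.exp (θ * ε)) * p ≤ 1 := le_trans hle hθ1.le
  have htr : Real.exp (θ * ε) * p.toReal ≤ 1 := by
    have h2 := ENNReal.toReal_mono (by norm_num) hlt
    rwa [ENNReal.toReal_mul, ENNReal.toReal_ofReal (Real.exp_pos _).le,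
      ENNReal.toReal_one] at h2
  have h3 : Real.exp (θ * ε) ≤ 1/p.toReal := by
    rw [le_div_iff₀ hpt]; exact htr
  have h4 : θ * ε ≤ Real.log (1/p.toReal) := by
    have := Real.log_le_log (Real.exp_pos _) h3
    rwa [Real.log_exp] at this
  rw [le_div_iff₀ hεpos]
  exact h4

/-- If `ρ = g(κ) = 1`, then `g'(κ) = E[(-X) e^{-κX}]` is strictly positive (but possibly
infinite); here the expectation is expressed as the difference of the positive and negative
parts in `ℝ≥0∞`. -/
theorem gderiv_pos
    {Ω : Type*} [MeasurableSpace Ω] (P : Measure Ω) [IsProbabilityMeasure P]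
    (X : Ω → ℝ) (hX : Measurable X)
    (g : ℝ → ℝ≥0∞) (hg : ∀ θ, g θ = ∫⁻ ω, ENNReal.ofReal (Real.exp (-θ * X ω)) ∂P)
    -- `E X ∈ (0, ∞]`
    (hneg : ∫⁻ ω, ENNReal.ofReal (-X ω) ∂P < ⊤)
    (hmean : ∫⁻ ω, ENNReal.ofReal (-X ω) ∂P < ∫⁻ ω, ENNReal.ofReal (X ω) ∂P)
    (hXneg : 0 < P {ω | X ω < 0})
    (hθ : ∃ θ₀ > 0, g θ₀ < ⊤)
    (κ : ℝ) (hκ : κ = sSup {θ : ℝ | 0 < θ ∧ g θ < 1})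
    (hρ : g κ = 1) :
    0 < ∫⁻ ω, ENNReal.ofReal (-X ω * Real.exp (-κ * X ω)) ∂P
          - ∫⁻ ω, ENNReal.ofReal (X ω * Real.exp (-κ * X ω)) ∂P := by
  obtain ⟨θ₀, hθ₀pos, hθ₀fin⟩ := hθ
  rw [hg θ₀] at hθ₀fin
  obtain ⟨θ₁, hθ₁pos, hθ₁lt⟩ := exists_small P X hX hneg hmean θ₀ hθ₀pos hθ₀fin
  have hSeq : {θ : ℝ | 0 < θ ∧ g θ < 1}
      = {θ : ℝ | 0 < θ ∧ ∫⁻ ω, ENNReal.ofReal (Real.exp (-θ * X ω)) ∂P < 1} := by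
    ext θ; rw [mem_setOf_eq, mem_setOf_eq, hg θ]
  have hbdd : BddAbove {θ : ℝ | 0 < θ ∧ g θ < 1} := by
    rw [hSeq]; exact bdd_S P X hX hXneg
  have hmem : θ₁ ∈ {θ : ℝ | 0 < θ ∧ g θ < 1} := by
    rw [hSeq]; exact ⟨hθ₁pos, hθ₁lt⟩
  have hθ₁κ : θ₁ ≤ κ := hκ ▸ le_csSup hbdd hmem
  have hθ₁ne : θ₁ ≠ κ := by
    intro h
    rw [h] at hmem
    exact absurd hρ hmem.2.ne
  have hθ₁lt' : θ₁ < κ := lt_of_le_of_ne hθ₁κ hθ₁ne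
  have hκpos : 0 < κ := lt_trans hθ₁pos hθ₁lt'
  -- notation
  set A := ∫⁻ ω, ENNReal.ofReal (-X ω * Real.exp (-κ * X ω)) ∂P with hA
  set B := ∫⁻ ω, ENNReal.ofReal (X ω * Real.exp (-κ * X ω)) ∂P with hB
  set c : ℝ := κ - θ₁ with hc
  have hcpos : 0 < c := by simp [hc]; linarith
  set C := ENNReal.ofReal c with hC
  rw [tsub_pos_iff_lt]
  -- B is finite
  have hBfin : B < ⊤ := by
    have hpt : ∀ ω, ENNReal.ofReal (X ω * Real.exp (-κ * X ω)) ≤ ENNReal.ofReal (1/κ) := by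
      intro ω
      apply ENNReal.ofReal_le_ofReal
      have h1 : (κ * X ω) * Real.exp (-(κ * X ω)) ≤ 1 := self_mul_exp_neg_le_one _
      have h2 : -(κ * X ω) = -κ * X ω := by ring
      rw [h2] at h1
      rw [le_div_iff₀ hκpos]
      nlinarith
    calc B ≤ ∫⁻ _, ENNReal.ofReal (1/κ) ∂P := lintegral_mono hpt
    _ = ENNReal.ofReal (1/κ) := by simp
    _ < ⊤ := ENNReal.ofReal_lt_top
  -- pointwise tangent inequality
  have key : ∀ ω, ENNReal.ofReal (Real.exp (-κ * X ω)) + C * ENNReal.ofReal (X ω * Real.exp (-κ * X ω))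
      ≤ ENNReal.ofReal (Real.exp (-θ₁ * X ω)) + C * ENNReal.ofReal (-X ω * Real.exp (-κ * X ω)) := by
    intro ω
    set x := X ω with hx
    have htan : Real.exp (-κ*x) + c * (x * Real.exp (-κ*x)) ≤ Real.exp (-θ₁*x) := by
      have h1 := Real.add_one_le_exp (c*x)
      have h2 : Real.exp (c*x) * Real.exp (-κ*x) = Real.exp (-θ₁*x) := by
        rw [← Real.exp_add]; congr 1; rw [hc]; ring
      nlinarith [Real.exp_pos (-κ*x),
        mul_le_mul_of_nonneg_right h1 (Real.exp_pos (-κ*x)).le]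
    rcases le_total 0 x with hxp | hxn
    · have e1 : ENNReal.ofReal (-x * Real.exp (-κ*x)) = 0 :=
        ENNReal.ofReal_of_nonpos (by nlinarith [Real.exp_pos (-κ*x)])
      rw [e1, mul_zero, add_zero, hC, ← ENNReal.ofReal_mul hcpos.le,
        ← ENNReal.ofReal_add (Real.exp_pos _).le
          (mul_nonneg hcpos.le (mul_nonneg hxp (Real.exp_pos _).le))]
      exact ENNReal.ofReal_le_ofReal htan
    · have e1 : ENNReal.ofReal (x * Real.exp (-κ*x)) = 0 :=
        ENNReal.ofReal_of_nonpos (by nlinarith [Real.exp_pos (-κ*x)])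
      rw [e1, mul_zero, add_zero, hC, ← ENNReal.ofReal_mul hcpos.le,
        ← ENNReal.ofReal_add (Real.exp_pos _).le
          (mul_nonneg hcpos.le (mul_nonneg (by linarith) (Real.exp_pos _).le))]
      apply ENNReal.ofReal_le_ofReal
      nlinarith
  -- integrate
  have hint : g κ + C * B ≤ g θ₁ + C * A := by
    rw [hg κ, hg θ₁, hA, hB]
    calc ∫⁻ ω, ENNReal.ofReal (Real.exp (-κ * X ω)) ∂P
          + C * ∫⁻ ω, ENNReal.ofReal (X ω * Real.exp (-κ * X ω)) ∂P
        = ∫⁻ ω, (ENNReal.ofReal (Real.exp (-κ * X ω))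
            + C * ENNReal.ofReal (X ω * Real.exp (-κ * X ω))) ∂P := by
          rw [lintegral_add_left ((hX.const_mul (-κ)).exp).ennreal_ofReal,
            lintegral_const_mul (f := fun ω => ENNReal.ofReal (X ω * Real.exp (-κ * X ω))) _ (hX.mul ((hX.const_mul (-κ)).exp)).ennreal_ofReal]
      _ ≤ ∫⁻ ω, (ENNReal.ofReal (Real.exp (-θ₁ * X ω))
            + C * ENNReal.ofReal (-X ω * Real.exp (-κ * X ω))) ∂P := lintegral_mono key
      _ = _ := by
          rw [lintegral_add_left ((hX.const_mul (-θ₁)).exp).ennreal_ofReal,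
            lintegral_const_mul (f := fun ω => ENNReal.ofReal (-X ω * Real.exp (-κ * X ω))) _ (hX.neg.mul ((hX.const_mul (-κ)).exp)).ennreal_ofReal]
  rw [hρ] at hint
  rcases eq_or_ne A ⊤ with hAtop | hAne
  · rw [hAtop]; exact hBfin
  · have hCA : C * A ≠ ⊤ := ENNReal.mul_ne_top ENNReal.ofReal_ne_top hAne
    have hstep : (1 : ℝ≥0∞) + C * B < 1 + C * A := by
      calc (1 : ℝ≥0∞) + C * B ≤ g θ₁ + C * A := hint
      _ < 1 + C * A := (ENNReal.add_lt_add_iff_right hCA).mpr hmem.2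
    have hCB : C * B < C * A := (ENNReal.add_lt_add_iff_left (by norm_num)).mp hstep
    have hCne : C ≠ 0 := by
      rw [hC]; simpa using hcpos
    exact (ENNReal.mul_lt_mul_iff_right hCne ENNReal.ofReal_ne_top).mp hCB

end
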